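/- Let b and s be integers with 2 ≤ b < s, and define M̂(x) = ((1+x)^s − 1)/b for x ≥ 0. For every λ > 0 there is a constant C > 0 such that for all 0 ≤ x ≤ λ and all integers N ≥ n ≥ 0, M̂^{N−n}(x·(b/s)^N) − x·(b/s)^n ≤ C·x²·(b/s)^{2n}. -/

import Mathlib

set_option maxHeartbeats 1000000

open Filter

lemma stmt7_aux_pow (s : ℕ) : ∀ y : ℝ, 0 ≤ y → y ≤ 1 →
    (1 + y) ^ s ≤ 1 + s * y + 3 ^ s * y ^ 2 := by
  induction s with
  | zero => intro y hy hy1; simp; positivity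
  | succ n ih =>
    intro y hy hy1
    have h := ih y hy hy1
    have h3 : (n : ℝ) ≤ 3 ^ n := by
      calc (n : ℝ) ≤ 2 ^ n := by exact_mod_cast (Nat.lt_two_pow_self (n := n)).le
      _ ≤ 3 ^ n := by
        apply pow_le_pow_left₀ (by norm_num) (by norm_num)
    have h1y : (0:ℝ) ≤ 1 + y := by linarith
    calc (1 + y) ^ (n + 1) = (1 + y) ^ n * (1 + y) := pow_succ _ _
      _ ≤ (1 + n * y + 3 ^ n * y ^ 2) * (1 + y) := by
        apply mul_le_mul_of_nonneg_right h h1y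
      _ ≤ 1 + (↑(n + 1)) * y + 3 ^ (n + 1) * y ^ 2 := by
        have hp : (0:ℝ) < 3 ^ n := by positivity
        rw [show (3:ℝ)^(n+1) = 3^n*3 from pow_succ 3 n]
        push_cast
        nlinarith [mul_nonneg (sub_nonneg.mpr h3) (sq_nonneg y),
          mul_nonneg hp.le (mul_nonneg (sq_nonneg y) (sub_nonneg.mpr hy1))]

theorem stmt7 (b s : ℕ) (hb : 2 ≤ b) (hbs : b < s)
    (Mhat : ℝ → ℝ) (hMhat : ∀ x : ℝ, Mhat x = ((1 + x) ^ s - 1) / b) :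
    ∀ lam : ℝ, 0 < lam → ∃ C : ℝ, 0 < C ∧
      ∀ x : ℝ, 0 ≤ x → x ≤ lam → ∀ N n : ℕ, n ≤ N →
        Mhat^[N - n] (x * ((b : ℝ) / s) ^ N) - x * ((b : ℝ) / s) ^ n
          ≤ C * x ^ 2 * ((b : ℝ) / s) ^ (2 * n) := by
  intro lam hlam
  have hb0 : (0:ℝ) < b := by positivity
  have hs0 : (0:ℝ) < s := by
    have : 0 < s := by omega
    positivity
  have hbs' : (b:ℝ) < s := by exact_mod_cast hbs
  set r : ℝ := (b:ℝ) / s with hrdef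
  have hr0 : 0 < r := div_pos hb0 hs0
  have hr1 : r < 1 := (div_lt_one hs0).mpr hbs'
  set q : ℝ := (s:ℝ) / b with hqdef
  have hq1 : 1 < q := (one_lt_div hb0).mpr hbs'
  have hqr : q * r = 1 := by rw [hqdef, hrdef]; field_simp
  set K : ℝ := (3:ℝ) ^ s / b with hKdef
  have hK0 : 0 < K := by positivity
  -- upper bound for Mhat on [0,1]
  have hup : ∀ y : ℝ, 0 ≤ y → y ≤ 1 → Mhat y ≤ q * y + K * y ^ 2 := by
    intro y hy hy1
    rw [hMhat, div_le_iff₀ hb0]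
    have h := stmt7_aux_pow s y hy hy1
    have hqb : q * (b:ℝ) = s := by rw [hqdef]; field_simp
    have hKb : K * (b:ℝ) = 3 ^ s := by rw [hKdef]; field_simp
    nlinarith
  -- lower bound
  have hlow : ∀ y : ℝ, 0 ≤ y → q * y ≤ Mhat y := by
    intro y hy
    rw [hMhat, le_div_iff₀ hb0]
    have h := one_add_mul_le_pow (show (-2:ℝ) ≤ y by linarith) s
    have hqb : q * (b:ℝ) = s := by rw [hqdef]; field_simp
    nlinarith
  have hself : ∀ y : ℝ, 0 ≤ y → y ≤ Mhat y := by
    intro y hy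
    have := hlow y hy
    nlinarith
  have hnn : ∀ y : ℝ, 0 ≤ y → 0 ≤ Mhat y := fun y hy => le_trans hy (hself y hy)
  have hmono : ∀ a c : ℝ, 0 ≤ a → a ≤ c → Mhat a ≤ Mhat c := by
    intro a c ha hac
    rw [hMhat, hMhat]
    have hpow : (1 + a) ^ s ≤ (1 + c) ^ s :=
      pow_le_pow_left₀ (by linarith) (by linarith) s
    gcongr
  have hiter_nn : ∀ k : ℕ, ∀ y : ℝ, 0 ≤ y → 0 ≤ Mhat^[k] y := by
    intro k
    induction k with
    | zero => intro y hy; simpa using hy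
    | succ m ih =>
      intro y hy
      rw [Function.iterate_succ_apply']
      exact hnn _ (ih y hy)
  have hiter_mono : ∀ k : ℕ, ∀ a c : ℝ, 0 ≤ a → a ≤ c → Mhat^[k] a ≤ Mhat^[k] c := by
    intro k
    induction k with
    | zero => intro a c _ hac; simpa using hac
    | succ m ih =>
      intro a c ha hac
      rw [Function.iterate_succ_apply', Function.iterate_succ_apply']
      exact hmono _ _ (hiter_nn m a ha) (ih a c ha hac)
  have hiter_self : ∀ k : ℕ, ∀ y : ℝ, 0 ≤ y → y ≤ Mhat^[k] y := by
    intro k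
    induction k with
    | zero => intro y hy; simp
    | succ m ih =>
      intro y hy
      rw [Function.iterate_succ_apply']
      exact le_trans (ih y hy) (hself _ (hiter_nn m y hy))
  have hiter_le : ∀ k l : ℕ, ∀ y : ℝ, 0 ≤ y → k ≤ l → Mhat^[k] y ≤ Mhat^[l] y := by
    intro k l y hy hkl
    have h1 : Mhat^[l] y = Mhat^[l - k] (Mhat^[k] y) := by
      rw [← Function.iterate_add_apply]
      congr 1
      omega
    rw [h1]
    exact hiter_self (l - k) _ (hiter_nn k y hy)
  -- constants
  set C₀ : ℝ := max 1 (4 * K / (q ^ 2 - q)) with hC₀def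
  have hC₀1 : (1:ℝ) ≤ C₀ := le_max_left _ _
  have hC₀0 : (0:ℝ) < C₀ := lt_of_lt_of_le one_pos hC₀1
  have hq2q : 0 < q ^ 2 - q := by nlinarith
  have hkey : q * C₀ + (9/4) * K ≤ q ^ 2 * C₀ := by
    have h4 : 4 * K / (q ^ 2 - q) ≤ C₀ := le_max_right _ _
    rw [div_le_iff₀ hq2q] at h4
    nlinarith
  set δ : ℝ := 1 / (2 * C₀) with hδdef
  have hδ0 : 0 < δ := by positivity
  have hδC : C₀ * δ = 1 / 2 := by
    rw [hδdef]; field_simp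
  have hδ1 : δ ≤ 1 / 2 := by
    rw [hδdef, div_le_div_iff₀ (by positivity) (by norm_num)]
    linarith
  clear_value r q K C₀ δ
  -- Lemma A: quadratic bound in the small regime
  have lemA : ∀ N : ℕ, ∀ x : ℝ, 0 ≤ x → ∀ k : ℕ, k ≤ N → x * r ^ (N - k) ≤ δ →
      Mhat^[k] (x * r ^ N) ≤ x * r ^ (N - k) + C₀ * (x * r ^ (N - k)) ^ 2 := by
    intro N x hx k
    induction k with
    | zero =>
      intro _ _
      simp only [Nat.sub_zero, Function.iterate_zero, id_eq]
      nlinarith [sq_nonneg (x * r ^ N), hC₀0]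
    | succ m ih =>
      intro hmN hv
      have hm : m ≤ N := by omega
      have hNm : N - m = (N - (m + 1)) + 1 := by omega
      set v : ℝ := x * r ^ (N - (m + 1)) with hvdef
      have hv0 : 0 ≤ v := by positivity
      set u : ℝ := x * r ^ (N - m) with hudef
      have huv : u = v * r := by
        rw [hudef, hvdef, hNm, pow_succ]; ring
      have hu0 : 0 ≤ u := by positivity
      clear_value v u
      have huδ : u ≤ δ := by
        rw [huv]
        nlinarith
      have hIH := ih hm huδ
      set y : ℝ := Mhat^[m] (x * r ^ N) with hydef
      have hy0 : 0 ≤ y := by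
        rw [hydef]; exact hiter_nn m _ (by positivity)
      clear_value y
      have hcu : C₀ * u * u ≤ C₀ * δ * u :=
        mul_le_mul_of_nonneg_right (mul_le_mul_of_nonneg_left huδ hC₀0.le) hu0
      rw [hδC] at hcu
      have hyu : y ≤ (3/2) * u := by nlinarith [hIH]
      have hy1 : y ≤ 1 := by linarith
      rw [Function.iterate_succ_apply', ← hydef]
      calc Mhat y ≤ q * y + K * y ^ 2 := hup y hy0 hy1
        _ ≤ q * (u + C₀ * u ^ 2) + K * ((3/2) * u) ^ 2 := by
          have hyy : y ^ 2 ≤ ((3/2) * u) ^ 2 := by nlinarith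
          have h1 : q * y ≤ q * (u + C₀ * u ^ 2) :=
            mul_le_mul_of_nonneg_left hIH (by linarith)
          have h2 : K * y ^ 2 ≤ K * ((3/2) * u) ^ 2 :=
            mul_le_mul_of_nonneg_left hyy hK0.le
          linarith
        _ = q * u + (q * C₀ + 9/4 * K) * u ^ 2 := by ring
        _ ≤ q * u + q ^ 2 * C₀ * u ^ 2 := by
          have := mul_le_mul_of_nonneg_right hkey (sq_nonneg u)
          nlinarith
        _ = v + C₀ * v ^ 2 := by
          rw [huv]
          linear_combination (v + C₀ * v ^ 2 * (q * r + 1)) * hqr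
  -- uniform bound B
  obtain ⟨m, hm⟩ := exists_pow_lt_of_lt_one (div_pos hδ0 hlam) hr1
  have hlrm : lam * r ^ m ≤ δ := by
    rw [lt_div_iff₀ hlam] at hm
    nlinarith
  set B : ℝ := Mhat^[m] (lam + 1) with hBdef
  have hBlb : lam + 1 ≤ B := hiter_self m _ (by linarith)
  have hB0 : 0 < B := by linarith
  clear_value B
  have lemC : ∀ N k : ℕ, k ≤ N → ∀ x : ℝ, 0 ≤ x → x ≤ lam → Mhat^[k] (x * r ^ N) ≤ B := by
    intro N k hkN x hx hxl
    have hxr : ∀ i : ℕ, x * r ^ i ≤ lam := by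
      intro i
      have h1 : r ^ i ≤ 1 := pow_le_one₀ hr0.le hr1.le
      nlinarith
    have hsmall : ∀ j : ℕ, j ≤ N → x * r ^ (N - j) ≤ δ → Mhat^[j] (x * r ^ N) ≤ lam + 1 := by
      intro j hjN hjδ
      have h := lemA N x hx j hjN hjδ
      have h0 : 0 ≤ x * r ^ (N - j) := by positivity
      have : C₀ * (x * r ^ (N - j)) ^ 2 ≤ (1/2) * δ := by nlinarith
      nlinarith
    by_cases hks : x * r ^ (N - k) ≤ δ
    · exact le_trans (hsmall k hkN hks) hBlb
    · push_neg at hks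
      have hNkm : N - k < m := by
        by_contra hcon
        push_neg at hcon
        have h1 : r ^ (N - k) ≤ r ^ m := pow_le_pow_of_le_one hr0.le hr1.le hcon
        have h2 : x * r ^ (N - k) ≤ lam * r ^ m := by
          apply mul_le_mul hxl h1 (by positivity) hlam.le
        linarith
      by_cases hmN : m ≤ N
      · set j : ℕ := N - m with hjdef
        have hjk : j ≤ k := by omega
        have hNj : N - j = m := by omega
        have hjδ : x * r ^ (N - j) ≤ δ := by
          rw [hNj]
          calc x * r ^ m ≤ lam * r ^ m := by
                apply mul_le_mul_of_nonneg_right hxl (by positivity)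
            _ ≤ δ := hlrm
        have h2δ := hsmall j (by omega) hjδ
        have hsplit : Mhat^[k] (x * r ^ N) = Mhat^[k - j] (Mhat^[j] (x * r ^ N)) := by
          rw [← Function.iterate_add_apply]
          congr 1
          omega
        rw [hsplit]
        calc Mhat^[k - j] (Mhat^[j] (x * r ^ N))
            ≤ Mhat^[k - j] (lam + 1) :=
              hiter_mono _ _ _ (hiter_nn j _ (by positivity)) h2δ
          _ ≤ Mhat^[m] (lam + 1) := hiter_le _ _ _ (by linarith) (by omega)
          _ = B := hBdef.symm
      · calc Mhat^[k] (x * r ^ N) ≤ Mhat^[k] (lam + 1) := by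
              apply hiter_mono _ _ _ (by positivity)
              linarith [hxr N]
          _ ≤ Mhat^[m] (lam + 1) := hiter_le _ _ _ (by linarith) (by omega)
          _ = B := hBdef.symm
  -- conclusion
  refine ⟨max C₀ (B / δ ^ 2), lt_of_lt_of_le hC₀0 (le_max_left _ _), ?_⟩
  intro x hx hxl N n hnN
  set C : ℝ := max C₀ (B / δ ^ 2) with hCdef
  have hC0 : 0 < C := lt_of_lt_of_le hC₀0 (le_max_left _ _)
  have hrn2 : x ^ 2 * r ^ (2 * n) = (x * r ^ n) ^ 2 := by
    rw [pow_mul]; ring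
  have hxn0 : 0 ≤ x * r ^ n := by positivity
  by_cases hc : x * r ^ n ≤ δ
  · have hNn : N - (N - n) = n := by omega
    have hA := lemA N x hx (N - n) (Nat.sub_le N n) (by rw [hNn]; exact hc)
    rw [hNn] at hA
    have h1 : C₀ * (x * r ^ n) ^ 2 ≤ C * (x * r ^ n) ^ 2 :=
      mul_le_mul_of_nonneg_right (le_max_left _ _) (sq_nonneg _)
    calc Mhat^[N - n] (x * r ^ N) - x * r ^ n ≤ C₀ * (x * r ^ n) ^ 2 := by linarith
      _ ≤ C * (x * r ^ n) ^ 2 := h1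
      _ = C * x ^ 2 * r ^ (2 * n) := by rw [← hrn2]; ring
  · push_neg at hc
    have hB' := lemC N (N - n) (Nat.sub_le N n) x hx hxl
    have hδ2 : δ ^ 2 ≤ (x * r ^ n) ^ 2 :=
      pow_le_pow_left₀ hδ0.le hc.le 2
    have hBd : 0 ≤ B / δ ^ 2 := by positivity
    have h2 : B ≤ (B / δ ^ 2) * (x * r ^ n) ^ 2 := by
      have he : (B / δ ^ 2) * δ ^ 2 = B := by field_simp
      have := mul_le_mul_of_nonneg_left hδ2 hBd
      linarith
    have h3 : (B / δ ^ 2) * (x * r ^ n) ^ 2 ≤ C * (x * r ^ n) ^ 2 :=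
      mul_le_mul_of_nonneg_right (le_max_right _ _) (sq_nonneg _)
    calc Mhat^[N - n] (x * r ^ N) - x * r ^ n ≤ B := by linarith
      _ ≤ C * (x * r ^ n) ^ 2 := by linarith
      _ = C * x ^ 2 * r ^ (2 * n) := by rw [← hrn2]; ring
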